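/- arXiv:2303.16367 — 2 statements merged into one kernel-verified Lean document; each statement's English description precedes it below -/
import Mathlib

section
/- Let X be a uniformly convex and uniformly smooth real Banach space with duality maps J : X → X* and J* : X* → X (so J* ∘ J = id_X). For r > 0, the generalized projection π_{B(r)} : X* → B(r), defined by minimizing the Lyapunov functional V(φ, y) = ‖φ‖² − 2⟨φ, y⟩ + ‖y‖² over y ∈ B(r), satisfies: π_{B(r)}(φ) = J*(φ) if ‖φ‖ ≤ r, and π_{B(r)}(φ) = (r/‖φ‖)·J*(φ) if ‖φ‖ > r. -/
open Metric

/-- The generalized projection `π_{B(r)}`, the minimizer of the Lyapunov functional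
`V(φ, y) = ‖φ‖² − 2⟨φ, y⟩ + ‖y‖²` over the closed ball `B(r)`, is `J*φ` when
`‖φ‖ ≤ r` and `(r/‖φ‖) • J*φ` when `‖φ‖ > r` (stated as: the candidate lies in
`B(r)` and minimizes `V(φ, ·)` there). -/
theorem stmt_17 {X : Type*} [NormedAddCommGroup X] [NormedSpace ℝ X]
    [UniformConvexSpace X] [UniformConvexSpace (X →L[ℝ] ℝ)]
    (Js : (X →L[ℝ] ℝ) → X)
    (hJs : ∀ φ : X →L[ℝ] ℝ, φ (Js φ) = ‖φ‖ ^ 2 ∧ ‖Js φ‖ = ‖φ‖)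
    (r : ℝ) (hr : 0 < r)
    (V : (X →L[ℝ] ℝ) → X → ℝ)
    (hV : ∀ φ y, V φ y = ‖φ‖ ^ 2 - 2 * φ y + ‖y‖ ^ 2) (φ : X →L[ℝ] ℝ) :
    (‖φ‖ ≤ r → Js φ ∈ closedBall (0 : X) r ∧
      ∀ y ∈ closedBall (0 : X) r, V φ (Js φ) ≤ V φ y) ∧
    (r < ‖φ‖ → (r / ‖φ‖) • Js φ ∈ closedBall (0 : X) r ∧
      ∀ y ∈ closedBall (0 : X) r, V φ ((r / ‖φ‖) • Js φ) ≤ V φ y) := by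
  obtain ⟨hφJ, hnJ⟩ := hJs φ
  have hbound : ∀ y : X, φ y ≤ ‖φ‖ * ‖y‖ := fun y =>
    le_trans (le_abs_self _) (φ.le_opNorm y)
  constructor
  · intro h
    constructor
    · simpa [mem_closedBall, dist_eq_norm, hnJ] using h
    · intro y hy
      have hy' := hbound y
      rw [hV, hV, hφJ, hnJ]
      nlinarith [sq_nonneg (‖φ‖ - ‖y‖)]
  · intro h
    have hφpos : (0:ℝ) < ‖φ‖ := hr.trans h
    have hnc : ‖(r / ‖φ‖) • Js φ‖ = r := by
      rw [norm_smul, hnJ, Real.norm_eq_abs, abs_of_pos (div_pos hr hφpos)]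
      field_simp
    have hφc : φ ((r / ‖φ‖) • Js φ) = r * ‖φ‖ := by
      rw [map_smul, smul_eq_mul, hφJ]
      field_simp
    constructor
    · simp [mem_closedBall, dist_eq_norm, hnc]
    · intro y hy
      have hy' : ‖y‖ ≤ r := by simpa [mem_closedBall, dist_eq_norm] using hy
      have hb := hbound y
      have hyn : (0:ℝ) ≤ ‖y‖ := norm_nonneg y
      rw [hV, hV, hφc, hnc]
      nlinarith [mul_nonneg (sub_nonneg.2 hy') (sub_pos.2 (hy'.trans_lt h)).le]
end

section
/- Let X be a uniformly convex and uniformly smooth real Banach space with duality map J, r > 0, and B(r) the closed ball at 0. Then the generalized metric projection Π_{B(r)}(g) = π_{B(r)}(Jg) satisfies Π_{B(r)}(g) = g for ‖g‖ ≤ r and Π_{B(r)}(g) = (r/‖g‖)g for ‖g‖ > r; in particular Π_{B(r)} coincides with the metric projection P_{B(r)} on closed balls centered at the origin. -/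
open Metric

/-- The generalized metric projection `Π_{B(r)}(g) = π_{B(r)}(Jg)` equals `g` for
`‖g‖ ≤ r` and `(r/‖g‖) • g` for `‖g‖ > r`, stated via the minimization of the
Lyapunov functional `V(Jg, ·)` over `B(r)`; in the second case this point is also
the metric (nearest point) projection of `g`. -/
theorem stmt_19 {X : Type*} [NormedAddCommGroup X] [NormedSpace ℝ X]
    [UniformConvexSpace X] [UniformConvexSpace (X →L[ℝ] ℝ)]
    (J : X → X →L[ℝ] ℝ)
    (hJ : ∀ y : X, J y y = ‖y‖ ^ 2 ∧ ‖J y‖ = ‖y‖)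
    (r : ℝ) (hr : 0 < r)
    (V : (X →L[ℝ] ℝ) → X → ℝ)
    (hV : ∀ φ y, V φ y = ‖φ‖ ^ 2 - 2 * φ y + ‖y‖ ^ 2) (g : X) :
    (‖g‖ ≤ r → ∀ y ∈ closedBall (0 : X) r, V (J g) g ≤ V (J g) y) ∧
    (r < ‖g‖ → (r / ‖g‖) • g ∈ closedBall (0 : X) r ∧
      (∀ y ∈ closedBall (0 : X) r, V (J g) ((r / ‖g‖) • g) ≤ V (J g) y) ∧
      (∀ f ∈ closedBall (0 : X) r, ‖g - (r / ‖g‖) • g‖ ≤ ‖g - f‖)) := by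
  obtain ⟨hJg, hJn⟩ := hJ g
  -- key lower bound: V (J g) y ≥ (‖g‖ - ‖y‖)^2
  have key : ∀ y : X, (‖g‖ - ‖y‖) ^ 2 ≤ V (J g) y := by
    intro y
    have h1 : J g y ≤ ‖g‖ * ‖y‖ := by
      calc J g y ≤ ‖J g y‖ := le_abs_self _
        _ ≤ ‖J g‖ * ‖y‖ := (J g).le_opNorm y
        _ = ‖g‖ * ‖y‖ := by rw [hJn]
    rw [hV, hJn]
    nlinarith
  constructor
  · intro hg y _
    have : V (J g) g = 0 := by rw [hV, hJn, hJg]; ring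
    rw [this]
    have := key y
    nlinarith [key y, sq_nonneg (‖g‖ - ‖y‖)]
  · intro hg
    have hgpos : 0 < ‖g‖ := hr.trans hg
    have ht : 0 < r / ‖g‖ := div_pos hr hgpos
    have hnp : ‖(r / ‖g‖) • g‖ = r := by
      rw [norm_smul, Real.norm_of_nonneg ht.le, div_mul_cancel₀ _ hgpos.ne']
    refine ⟨by simpa [mem_closedBall, dist_eq_norm] using hnp.le, ?_, ?_⟩
    · intro y hy
      have hy' : ‖y‖ ≤ r := by simpa [mem_closedBall, dist_eq_norm] using hy
      have hval : V (J g) ((r / ‖g‖) • g) = (‖g‖ - r) ^ 2 := by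
        rw [hV, hJn, hnp]
        have : J g ((r / ‖g‖) • g) = (r / ‖g‖) * ‖g‖ ^ 2 := by
          rw [map_smul, hJg]; rfl
        rw [this]
        field_simp
        ring
      have h2 : (‖g‖ - r) ^ 2 ≤ (‖g‖ - ‖y‖) ^ 2 := by nlinarith
      rw [hval]
      exact h2.trans (key y)
    · intro f hf
      have hf' : ‖f‖ ≤ r := by simpa [mem_closedBall, dist_eq_norm] using hf
      have hnn : (0:ℝ) ≤ 1 - r / ‖g‖ := by
        rw [sub_nonneg]
        exact (div_le_one hgpos).2 hg.le
      have h1 : ‖g - (r / ‖g‖) • g‖ = ‖g‖ - r := by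
        have heq : g - (r / ‖g‖) • g = (1 - r / ‖g‖) • g := by
          rw [sub_smul, one_smul]
        rw [heq, norm_smul, Real.norm_of_nonneg hnn]
        field_simp
      rw [h1]
      calc ‖g‖ - r ≤ ‖g‖ - ‖f‖ := by linarith
        _ ≤ ‖g - f‖ := norm_sub_norm_le g f
end
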